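/- Let X and Y be first countable compact Hausdorff spaces, each with at least two points, and let Δ : C(X) → C(Y) be a 2-local diameter-preserving map. Suppose that for every (x₁, x₂) ∈ X̃ the set A_{(x₁,x₂)} is a singleton, and let Γ : X̃ → Ỹ assign to (x₁, x₂) the unique element of A_{(x₁,x₂)}. Then Γ is injective, i.e. if Γ((x₁, x₂)) = Γ((x₃, x₄)) for (x₁, x₂), (x₃, x₄) ∈ X̃, then (x₁, x₂) = (x₃, x₄). -/

import Mathlib

noncomputable section

/-- The diameter seminorm `ρ(f) = sup{|f(x) - f(z)| : x, z ∈ X}` on `C(X, ℂ)`. -/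
def cdiam {X : Type*} [TopologicalSpace X] (f : C(X, ℂ)) : ℝ :=
  ⨆ p : X × X, ‖f p.1 - f p.2‖

/-- A map `Δ : C(X) → C(Y)` is diameter-preserving if `ρ(Δ f - Δ g) = ρ(f - g)` for all `f, g`. -/
def DiamPreserving {X Y : Type*} [TopologicalSpace X] [TopologicalSpace Y]
    (Δ : C(X, ℂ) → C(Y, ℂ)) : Prop :=
  ∀ f g, cdiam (Δ f - Δ g) = cdiam (f - g)

/-- A map `Δ : C(X) → C(Y)` is a 2-local diameter-preserving map if for every `f, g` there is a
diameter-preserving linear bijection agreeing with `Δ` at `f` and `g`. -/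
def TwoLocalDiamPreserving {X Y : Type*} [TopologicalSpace X] [TopologicalSpace Y]
    (Δ : C(X, ℂ) → C(Y, ℂ)) : Prop :=
  ∀ f g : C(X, ℂ), ∃ T : C(X, ℂ) →ₗ[ℂ] C(Y, ℂ),
    Function.Bijective T ∧ DiamPreserving T ∧ T f = Δ f ∧ T g = Δ g

/-- The set `B_{(x₁,x₂),f} = {((y₁,y₂),λ) ∈ Ỹ × 𝕋 : Δ(f)(y₁) - Δ(f)(y₂) = λ(f(x₁) - f(x₂))}`. -/
def Bset {X Y : Type*} [TopologicalSpace X] [TopologicalSpace Y]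
    (Δ : C(X, ℂ) → C(Y, ℂ)) (x₁ x₂ : X) (f : C(X, ℂ)) : Set ((Y × Y) × ℂ) :=
  {p | p.1.1 ≠ p.1.2 ∧ ‖p.2‖ = 1 ∧
    Δ f p.1.1 - Δ f p.1.2 = p.2 * (f x₁ - f x₂)}

/-- The set `𝕋⁺ = {e^{it} : t ∈ [0, π)}`. -/
def Tplus : Set ℂ :=
  {z | ∃ t : ℝ, 0 ≤ t ∧ t < Real.pi ∧ z = Complex.exp (t * Complex.I)}

/-- The set `A_{(x₁,x₂)} = {(y₁,y₂) ∈ Ỹ : ∃ λ ∈ 𝕋⁺, ((y₁,y₂),λ) ∈ B_{(x₁,x₂)}}`. -/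
def Aset {X Y : Type*} [TopologicalSpace X] [TopologicalSpace Y]
    (Δ : C(X, ℂ) → C(Y, ℂ)) (x₁ x₂ : X) : Set (Y × Y) :=
  {q | q.1 ≠ q.2 ∧ ∃ lam ∈ Tplus, (q, lam) ∈ ⋂ f : C(X, ℂ), Bset Δ x₁ x₂ f}


/-- Separation: given a finite set `S` and `x ∉ S`, there is `f ∈ C(X,ℂ)` with
`f x = 1` and `f = 0` on `S`. -/
lemma sep_lemma {X : Type*} [TopologicalSpace X] [CompactSpace X] [T2Space X]
    (x : X) (S : Set X) (hS : S.Finite) (hx : x ∉ S) :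
    ∃ f : C(X, ℂ), f x = 1 ∧ ∀ s ∈ S, f s = 0 := by
  obtain ⟨f, hf0, hf1, -⟩ := exists_continuous_zero_one_of_isClosed hS.isClosed
    isClosed_singleton (Set.disjoint_singleton_right.mpr hx)
  refine ⟨(⟨Complex.ofReal, Complex.continuous_ofReal⟩ : C(ℝ, ℂ)).comp f, ?_, ?_⟩
  · simp [hf1 rfl]
  · intro s hs
    simp [hf0 hs]

/-- `𝕋⁺` contains no pair of antipodal points. -/
lemma tplus_neg {lam : ℂ} (h1 : lam ∈ Tplus) (h2 : -lam ∈ Tplus) : False := by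
  obtain ⟨t, ht0, htpi, ht⟩ := h1
  obtain ⟨s, hs0, hspi, hs⟩ := h2
  have him1 : lam.im = Real.sin t := by rw [ht]; exact Complex.exp_ofReal_mul_I_im t
  have him2 : (-lam).im = Real.sin s := by rw [hs]; exact Complex.exp_ofReal_mul_I_im s
  have hsin_t : Real.sin t = 0 := by
    have h1' : 0 ≤ Real.sin t := Real.sin_nonneg_of_nonneg_of_le_pi ht0 htpi.le
    have h2' : 0 ≤ Real.sin s := Real.sin_nonneg_of_nonneg_of_le_pi hs0 hspi.le
    have : Real.sin s = -Real.sin t := by rw [← him2, Complex.neg_im, him1]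
    linarith
  have ht00 : t = 0 := by
    rcases eq_or_lt_of_le ht0 with h | h
    · exact h.symm
    · exact absurd hsin_t (Real.sin_pos_of_pos_of_lt_pi h htpi).ne'
  have hs00 : s = 0 := by
    have hsin_s : Real.sin s = 0 := by
      have : Real.sin s = -Real.sin t := by rw [← him2, Complex.neg_im, him1]
      rw [this, hsin_t, neg_zero]
    rcases eq_or_lt_of_le hs0 with h | h
    · exact h.symm
    · exact absurd hsin_s (Real.sin_pos_of_pos_of_lt_pi h hspi).ne'
  rw [ht00] at ht
  rw [hs00] at hs
  simp at ht hs
  rw [ht] at hs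
  norm_num at hs
/-- Claim 8: the map `Γ : X̃ → Ỹ` sending `(x₁, x₂)` to the unique point of `A_{(x₁,x₂)}`
is injective. -/
theorem Gamma_injective
    {X Y : Type*} [TopologicalSpace X] [CompactSpace X] [T2Space X] [FirstCountableTopology X]
    [TopologicalSpace Y] [CompactSpace Y] [T2Space Y] [FirstCountableTopology Y]
    (h2X : ∃ a b : X, a ≠ b) (h2Y : ∃ a b : Y, a ≠ b)
    (Δ : C(X, ℂ) → C(Y, ℂ)) (hΔ : TwoLocalDiamPreserving Δ)
    (Γ : X × X → Y × Y)
    (hΓ : ∀ p : X × X, p.1 ≠ p.2 → Aset Δ p.1 p.2 = {Γ p}) :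
    ∀ p q : X × X, p.1 ≠ p.2 → q.1 ≠ q.2 → Γ p = Γ q → p = q := by

  intro p q hp hq heq
  have hA1 : Γ p ∈ Aset Δ p.1 p.2 := by rw [hΓ p hp]; rfl
  have hA2 : Γ q ∈ Aset Δ q.1 q.2 := by rw [hΓ q hq]; rfl
  obtain ⟨-, lam1, hlam1, hB1⟩ := hA1
  obtain ⟨-, lam2, hlam2, hB2⟩ := hA2
  have hl1 : lam1 ≠ 0 := by
    obtain ⟨t, -, -, ht⟩ := hlam1; rw [ht]; exact Complex.exp_ne_zero _
  have hl2 : lam2 ≠ 0 := by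
    obtain ⟨t, -, -, ht⟩ := hlam2; rw [ht]; exact Complex.exp_ne_zero _
  have key : ∀ f : C(X, ℂ), lam1 * (f p.1 - f p.2) = lam2 * (f q.1 - f q.2) := by
    intro f
    have h1 := (Set.mem_iInter.mp hB1 f).2.2
    have h2 := (Set.mem_iInter.mp hB2 f).2.2
    rw [heq] at h1
    rw [← h1, ← h2]
  have h1mem : p.1 = q.1 ∨ p.1 = q.2 := by
    by_contra h
    push_neg at h
    obtain ⟨f, hfx, hf0⟩ := sep_lemma p.1 {p.2, q.1, q.2}
      (Set.toFinite _) (by simp [hp, h.1, h.2])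
    have := key f
    rw [hfx, hf0 p.2 (by simp), hf0 q.1 (by simp), hf0 q.2 (by simp)] at this
    simp at this
    exact hl1 this
  have h2mem : p.2 = q.1 ∨ p.2 = q.2 := by
    by_contra h
    push_neg at h
    obtain ⟨f, hfx, hf0⟩ := sep_lemma p.2 {p.1, q.1, q.2}
      (Set.toFinite _) (by simp [hp.symm, h.1, h.2])
    have := key f
    rw [hfx, hf0 p.1 (by simp), hf0 q.1 (by simp), hf0 q.2 (by simp)] at this
    simp at this
    exact hl1 this
  rcases h1mem with h1 | h1
  · rcases h2mem with h2 | h2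
    · exact absurd (h1.trans h2.symm) hp
    · exact Prod.ext h1 h2
  · -- p.1 = q.2, so p.2 = q.1 (since p.2 ≠ q.2 = p.1)
    have h2 : p.2 = q.1 := by
      rcases h2mem with h2 | h2
      · exact h2
      · exact absurd (h1.trans h2.symm) hp
    exfalso
    obtain ⟨f, hfx, hf0⟩ := sep_lemma q.1 {q.2} (Set.toFinite _) (by simp [hq])
    have := key f
    rw [h1, h2, hfx, hf0 q.2 (by simp)] at this
    simp at this
    -- this : -lam1 = lam2 (in some form)
    have : -lam1 = lam2 := by linear_combination this
    exact tplus_neg hlam1 (this ▸ hlam2)
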